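/- Let φ : {0,1}^m × {0,1}^ℓ → Bool. Define the two-agent sequential decision-making mechanism M with action sets A_1 = {0,1}^m and A_2 = {0,1}^ℓ × {0,1} (agent 2 chooses a pair (b, z)), and deontic constraint γ(a, (b, z)) = φ(a, b) ∧ z. Then (for every a ∈ {0,1}^m there exists b ∈ {0,1}^ℓ with φ(a, b) = true) if and only if M ∈ GDF. -/
import Mathlib


/-- A sequential decision-making mechanism: `n` agents, finite nonempty
action sets `A 0, …, A (n-1)` (agents act in the order of their indices),
and a deontic constraint `γ` on action profiles. -/
structure Mech where
  n : ℕ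
  A : Fin n → Type
  fin : ∀ i, Finite (A i)
  ne : ∀ i, Nonempty (A i)
  γ : (∀ i, A i) → Bool

namespace Mech

/-- An action profile. -/
abbrev Profile (M : Mech) : Type := ∀ i, M.A i

/-- Agent `i` is responsible under profile `s`: the deontic constraint is
violated, and agent `i` had an action `t` that, given the actions of the
agents before it, would have guaranteed the constraint no matter what the
later agents do. -/
def Responsible (M : Mech) (s : M.Profile) (i : Fin M.n) : Prop :=
  M.γ s = false ∧ ∃ t : M.A i, ∀ s' : M.Profile,
    (∀ j, j < i → s' j = s j) → s' i = t → M.γ s' = true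

/-- `cf_i(s_1, …, s_{i-1})`: agent `i` has an action guaranteeing the
constraint, given the prefix of `s` before `i`. -/
def Cf (M : Mech) (s : M.Profile) (i : Fin M.n) : Prop :=
  ∃ t : M.A i, ∀ s' : M.Profile,
    (∀ j, j < i → s' j = s j) → s' i = t → M.γ s' = true

/-- Diffusion-free: at most one responsible agent whenever `γ` is violated. -/
def DF (M : Mech) : Prop :=
  ∀ s : M.Profile, M.γ s = false →
    ∀ i j, M.Responsible s i → M.Responsible s j → i = j

/-- Gap-free: at least one responsible agent whenever `γ` is violated. -/
def GF (M : Mech) : Prop :=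
  ∀ s : M.Profile, M.γ s = false → ∃ i, M.Responsible s i

/-- Gap-and-diffusion-free: exactly one responsible agent whenever `γ` is violated. -/
def GDF (M : Mech) : Prop :=
  ∀ s : M.Profile, M.γ s = false → ∃! i, M.Responsible s i

/-- Responsibility-free: no agent is responsible under any profile. -/
def RF (M : Mech) : Prop :=
  ∀ (s : M.Profile) (i : Fin M.n), ¬ M.Responsible s i

/-- Agent `j` of the partial mechanism `M_k` as an agent of `M`. -/
def shift (M : Mech) (k : ℕ) (h : k ≤ M.n) (j : Fin (M.n - k)) : Fin M.n :=
  ⟨k + j.val, by omega⟩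

/-- Combine a prefix of `s` (first `k` actions) with actions `u` of
agents `k+1, …, n` into a full profile. -/
def glue (M : Mech) (k : ℕ) (h : k ≤ M.n) (s : M.Profile)
    (u : ∀ j : Fin (M.n - k), M.A (M.shift k h j)) : M.Profile := fun i =>
  if hi : i.val < k then s i
  else
    have hj : i.val - k < M.n - k := by omega
    have he : M.shift k h ⟨i.val - k, hj⟩ = i := Fin.ext (by
      show k + (i.val - k) = i.val
      omega)
    he ▸ u ⟨i.val - k, hj⟩

/-- The partial mechanism `M_k(s_1, …, s_k)`: the first `k` agents have
already acted according to `s`. -/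
def part (M : Mech) (k : ℕ) (h : k ≤ M.n) (s : M.Profile) : Mech where
  n := M.n - k
  A := fun j => M.A (M.shift k h j)
  fin := fun _ => M.fin _
  ne := fun _ => M.ne _
  γ := fun u => M.γ (M.glue k h s u)

/-- The restriction of a profile of `M` to a profile of `M_k(s_1, …, s_k)`. -/
def restrict (M : Mech) (k : ℕ) (h : k ≤ M.n) (s : M.Profile) :
    (M.part k h s).Profile :=
  fun j => s (M.shift k h j)

end Mech

/-- The two-agent mechanism of STATEMENT 9: agent 1 chooses `a`,
agent 2 chooses `(b, z)`, and `γ(a, (b,z)) = φ(a,b) ∧ z`. -/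
def gdfMech (m ℓ : ℕ) (φ : (Fin m → Bool) → (Fin ℓ → Bool) → Bool) : Mech where
  n := 2
  A := ![Fin m → Bool, (Fin ℓ → Bool) × Bool]
  fin := by intro i; fin_cases i <;> dsimp <;> infer_instance
  ne := by intro i; fin_cases i <;> dsimp <;> infer_instance
  γ := fun s => φ (s 0) (s 1).1 && (s 1).2

section
variable (m ℓ : ℕ) (φ : (Fin m → Bool) → (Fin ℓ → Bool) → Bool)

/-- Helper: build a profile of `gdfMech`. -/
def gdfProf (a : Fin m → Bool) (p : (Fin ℓ → Bool) × Bool) :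
    (gdfMech m ℓ φ).Profile :=
  Fin.cons a (Fin.cons p finZeroElim)

/-- Agent 1 of `gdfMech`. -/
def gdfI0 : Fin (gdfMech m ℓ φ).n := ⟨0, Nat.zero_lt_two⟩

/-- Agent 2 of `gdfMech`. -/
def gdfI1 : Fin (gdfMech m ℓ φ).n := ⟨1, Nat.one_lt_two⟩

theorem forall_exists_iff_GDF' :
    (∀ a : Fin m → Bool, ∃ b : Fin ℓ → Bool, φ a b = true) ↔
      (gdfMech m ℓ φ).GDF := by
  have eq1 : ∀ i : Fin (gdfMech m ℓ φ).n, i ≠ gdfI0 m ℓ φ → i = gdfI1 m ℓ φ := by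
    intro i hne
    have h2 : i.val < 2 := i.isLt
    have h0 : i.val ≠ 0 := fun h => hne (Fin.ext h)
    exact Fin.ext (show i.val = 1 by omega)
  have not0 : ∀ s : (gdfMech m ℓ φ).Profile,
      ¬ (gdfMech m ℓ φ).Responsible s (gdfI0 m ℓ φ) := by
    rintro s ⟨-, t, ht⟩
    have h2 : (φ t (fun _ => false) && false) = true :=
      ht (gdfProf m ℓ φ t ((fun _ => false), false))
        (fun j hj => absurd (Fin.lt_def.mp hj) (Nat.not_lt_zero _)) rfl
    simp at h2
  constructor
  · intro h s hs
    refine ⟨gdfI1 m ℓ φ, ⟨hs, ?_⟩, ?_⟩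
    · obtain ⟨b, hb⟩ := h (s (gdfI0 m ℓ φ))
      refine ⟨(b, true), fun s' h0 h1 => ?_⟩
      have h00 : s' (gdfI0 m ℓ φ) = s (gdfI0 m ℓ φ) :=
        h0 (gdfI0 m ℓ φ) (Fin.lt_def.mpr Nat.zero_lt_one)
      show (φ (s' (gdfI0 m ℓ φ)) (s' (gdfI1 m ℓ φ)).1 && (s' (gdfI1 m ℓ φ)).2) = true
      rw [h00, h1, hb]
      rfl
    · intro j hj
      by_cases hj0 : j = gdfI0 m ℓ φ
      · exact absurd (hj0 ▸ hj) (not0 s)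
      · exact eq1 j hj0
  · intro h a
    have hs : (gdfMech m ℓ φ).γ (gdfProf m ℓ φ a ((fun _ => false), false)) = false := by
      show (φ a (fun _ => false) && false) = false
      simp
    obtain ⟨i, hi, -⟩ := h _ hs
    have hi1 : i = gdfI1 m ℓ φ := eq1 i (fun h0 => not0 _ (h0 ▸ hi))
    subst hi1
    obtain ⟨-, t, ht⟩ := hi
    have h2 : (φ a t.1 && t.2) = true :=
      ht (gdfProf m ℓ φ a t)
        (by
          intro j hj
          have hv : j.val < 1 := hj
          have hj0 : j = gdfI0 m ℓ φ := Fin.ext (show j.val = 0 by omega)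
          subst hj0
          rfl)
        rfl
    exact ⟨t.1, ((Bool.and_eq_true _ _).mp h2).1⟩

end


/-- `∀a ∃b, φ(a,b)` holds iff the mechanism is
gap-and-diffusion-free. -/
theorem forall_exists_iff_GDF (m ℓ : ℕ)
    (φ : (Fin m → Bool) → (Fin ℓ → Bool) → Bool) :
    (∀ a : Fin m → Bool, ∃ b : Fin ℓ → Bool, φ a b = true) ↔
      (gdfMech m ℓ φ).GDF := by
  exact forall_exists_iff_GDF' m ℓ φ
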